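/- Let N be a finite set of nodes and P a family of measurement paths, each path p ∈ P being a subset of N ∪ M (a path 'fails' under a failure set F ⊆ N iff p ∩ F ≠ ∅). Define a set S ⊆ N to be k-identifiable if for all F₁, F₂ ⊆ N with |F₁| ≤ k, |F₂| ≤ k, and F₁ ∩ S ≠ F₂ ∩ S, there exists p ∈ P with exactly one of p ∩ F₁ = ∅ and p ∩ F₂ = ∅. Theorem (sufficiency): if for every F ⊆ N with |F| ≤ k and every v ∈ S \ F there exists p ∈ P with v ∈ p and p ∩ F = ∅, then S is k-identifiable. -/
import Mathlib


variable {V : Type*} [DecidableEq V]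

/-- A set `S` of non-monitors is `k`-identifiable: any two failure sets of size at most `k`
that differ within `S` are distinguished by the failure state of some path. -/
def kIdent (N : Finset V) (P : Set (Finset V)) (S : Finset V) (k : ℕ) : Prop :=
  ∀ F₁ F₂ : Finset V, F₁ ⊆ N → F₂ ⊆ N → F₁.card ≤ k → F₂.card ≤ k →
    F₁ ∩ S ≠ F₂ ∩ S → ∃ p ∈ P, Xor' (p ∩ F₁ = ∅) (p ∩ F₂ = ∅)

theorem abstract_sufficiency (N S : Finset V) (P : Set (Finset V)) (k : ℕ) (hS : S ⊆ N)
    (h : ∀ F : Finset V, F ⊆ N → F.card ≤ k → ∀ v ∈ S \ F, ∃ p ∈ P, v ∈ p ∧ p ∩ F = ∅) :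
    kIdent N P S k := by
  intro F₁ F₂ h₁ h₂ hc₁ hc₂ hne
  have key : ∀ F G : Finset V, G ⊆ N → G.card ≤ k →
      (∃ v, v ∈ F ∩ S ∧ v ∉ G ∩ S) → ∃ p ∈ P, p ∩ G = ∅ ∧ ¬(p ∩ F = ∅) := by
    intro F G hG hcG ⟨v, hv, hvG⟩
    rw [Finset.mem_inter] at hv
    have hvG' : v ∉ G := fun hg => hvG (Finset.mem_inter.mpr ⟨hg, hv.2⟩)
    obtain ⟨p, hpP, hvp, hpG⟩ := h G hG hcG v (Finset.mem_sdiff.mpr ⟨hv.2, hvG'⟩)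
    refine ⟨p, hpP, hpG, fun hpF => ?_⟩
    exact (Finset.eq_empty_iff_forall_notMem.mp hpF v) (Finset.mem_inter.mpr ⟨hvp, hv.1⟩)
  by_cases hc : F₁ ∩ S ⊆ F₂ ∩ S
  · have : ¬ F₂ ∩ S ⊆ F₁ ∩ S := fun hs => hne (Finset.Subset.antisymm hc hs)
    obtain ⟨v, hv, hvn⟩ := Finset.not_subset.mp this
    obtain ⟨p, hpP, hpe, hpne⟩ := key F₂ F₁ h₁ hc₁ ⟨v, hv, hvn⟩
    exact ⟨p, hpP, Or.inl ⟨hpe, hpne⟩⟩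
  · obtain ⟨v, hv, hvn⟩ := Finset.not_subset.mp hc
    obtain ⟨p, hpP, hpe, hpne⟩ := key F₁ F₂ h₂ hc₂ ⟨v, hv, hvn⟩
    exact ⟨p, hpP, Or.inr ⟨hpe, hpne⟩⟩
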